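/- Let 0 < D < 1 and F ⊆ {0,…,N−1}. For every pair of vectors ũ_F, ũ'_F ∈ {0,1}^{|F|}, the average distortion of the Standard Model is the same: D_N(F, ũ_F) = D_N(F, ũ'_F). -/

import Mathlib

open Finset

noncomputable section

/-- The polarization kernel `G₂ = [[1,0],[1,1]]` over GF(2). -/
def G2 : Matrix (Fin 2) (Fin 2) (ZMod 2) := !![1, 0; 1, 1]

/-- Index identification `Fin 2 × Fin (2^n) ≃ Fin (2^(n+1))`. -/
def finPowEquiv (n : ℕ) : Fin 2 × Fin (2 ^ n) ≃ Fin (2 ^ (n + 1)) :=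
  finProdFinEquiv.trans (finCongr (by rw [pow_succ]; ring))

/-- The `n`-fold Kronecker power `G₂^{⊗n}` over GF(2). -/
def kronPow : (n : ℕ) → Matrix (Fin (2 ^ n)) (Fin (2 ^ n)) (ZMod 2)
  | 0 => 1
  | n + 1 => Matrix.reindex (finPowEquiv n) (finPowEquiv n)
      (Matrix.kroneckerMap (· * ·) G2 (kronPow n))

/-- Reversal of the `n`-bit binary expansion of `i`. -/
def bitRevNat (n i : ℕ) : ℕ :=
  ∑ k ∈ Finset.range n, if Nat.testBit i (n - 1 - k) then 2 ^ k else 0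

lemma sum_range_two_pow_lt (n : ℕ) : ∑ k ∈ Finset.range n, 2 ^ k < 2 ^ n := by
  induction n with
  | zero => simp
  | succ m ih => rw [Finset.sum_range_succ, pow_succ]; omega

lemma bitRevNat_lt (n i : ℕ) : bitRevNat n i < 2 ^ n := by
  have h1 : bitRevNat n i ≤ ∑ k ∈ Finset.range n, 2 ^ k :=
    Finset.sum_le_sum (fun k _ => by split <;> simp)
  have h2 := sum_range_two_pow_lt n
  omega

/-- The bit-reversal permutation matrix `Aₙ`. -/
def bitRevMatrix (n : ℕ) : Matrix (Fin (2 ^ n)) (Fin (2 ^ n)) (ZMod 2) :=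
  fun i j => if (j : ℕ) = bitRevNat n (i : ℕ) then 1 else 0

/-- The polar transform matrix `Hₙ = Aₙ G₂^{⊗n}`. -/
def polarH (n : ℕ) : Matrix (Fin (2 ^ n)) (Fin (2 ^ n)) (ZMod 2) :=
  bitRevMatrix n * kronPow n

/-- BSC(D) transition probability `W(y∣x)`. -/
def bsc (D : ℝ) (y x : ZMod 2) : ℝ := if y = x then 1 - D else D

/-- The polar transform `x̄ = ū Hₙ` of a word `ū`. -/
def polarEnc (n : ℕ) (u : Fin (2 ^ n) → ZMod 2) : Fin (2 ^ n) → ZMod 2 :=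
  Matrix.vecMul u (polarH n)

/-- `W^{(i)}(ȳ, u₀^{i−1} ∣ u_i)`; it depends on `u` only through coordinates `≤ i`,
the coordinates `> i` being summed out. -/
def Wi (D : ℝ) (n : ℕ) (y : Fin (2 ^ n) → ZMod 2) (i : Fin (2 ^ n))
    (u : Fin (2 ^ n) → ZMod 2) : ℝ :=
  ((2 : ℝ) ^ (2 ^ n - 1))⁻¹ *
    ∑ v ∈ Finset.univ.filter (fun v : Fin (2 ^ n) → ZMod 2 => ∀ j, j ≤ i → v j = u j),
      ∏ j, bsc D (y j) (polarEnc n v j)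

/-- The posterior `P(u_i ∣ u₀^{i−1}, ȳ)`. -/
def post (D : ℝ) (n : ℕ) (y : Fin (2 ^ n) → ZMod 2) (i : Fin (2 ^ n))
    (u : Fin (2 ^ n) → ZMod 2) : ℝ :=
  Wi D n y i u /
    (Wi D n y i (Function.update u i 0) + Wi D n y i (Function.update u i 1))

/-- The average distortion $D_N(F, ũ_F)$ of the Standard Model. -/
def avgDist (D : ℝ) (n : ℕ) (F : Finset (Fin (2 ^ n))) (ut : Fin (2 ^ n) → ZMod 2) : ℝ :=
  ∑ y : Fin (2 ^ n) → ZMod 2, ((2 : ℝ) ^ (2 ^ n))⁻¹ *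
    ∑ u ∈ Finset.univ.filter (fun u : Fin (2 ^ n) → ZMod 2 => ∀ i ∈ F, u i = ut i),
      (∏ i ∈ Fᶜ, post D n y i u) * (hammingDist y (polarEnc n u) : ℝ)


lemma bsc_shift (D : ℝ) (y x e : ZMod 2) : bsc D (y + e) (x + e) = bsc D y x := by
  simp [bsc, add_left_inj]

lemma polarEnc_add (n : ℕ) (u v : Fin (2 ^ n) → ZMod 2) :
    polarEnc n (u + v) = polarEnc n u + polarEnc n v := by
  simp [polarEnc, Matrix.add_vecMul]

lemma hamm_shift {N : ℕ} (y x e : Fin N → ZMod 2) :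
    hammingDist (y + e) (x + e) = hammingDist y x := by
  simp only [hammingDist]
  congr 1
  apply Finset.filter_congr
  intro j _
  simp [add_left_inj]

lemma Wi_shift (D : ℝ) (n : ℕ) (y : Fin (2 ^ n) → ZMod 2) (i : Fin (2 ^ n))
    (u c : Fin (2 ^ n) → ZMod 2) :
    Wi D n (y + polarEnc n c) i (u + c) = Wi D n y i u := by
  unfold Wi
  congr 1
  rw [Finset.sum_filter, Finset.sum_filter]
  refine Fintype.sum_equiv (Equiv.subRight c) _ _ (fun x => ?_)
  simp only [Equiv.subRight_apply]
  have hcond : (∀ j, j ≤ i → x j = (u + c) j) ↔ (∀ j, j ≤ i → (x - c) j = u j) := by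
    constructor <;> intro h j hj <;> have h' := h j hj <;>
      simp only [Pi.add_apply, Pi.sub_apply, sub_eq_iff_eq_add] at h' ⊢ <;> exact h'
  have hprod : (∏ j, bsc D ((y + polarEnc n c) j) (polarEnc n x j))
      = ∏ j, bsc D (y j) (polarEnc n (x - c) j) := by
    apply Finset.prod_congr rfl
    intro j _
    have hx : polarEnc n x = polarEnc n (x - c) + polarEnc n c := by
      rw [← polarEnc_add, sub_add_cancel]
    rw [hx]
    simp only [Pi.add_apply]
    exact bsc_shift D (y j) (polarEnc n (x - c) j) (polarEnc n c j)
  rw [hprod]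
  exact if_congr hcond rfl rfl

lemma post_shift (D : ℝ) (n : ℕ) (y : Fin (2 ^ n) → ZMod 2) (i : Fin (2 ^ n))
    (u c : Fin (2 ^ n) → ZMod 2) (hci : c i = 0) :
    post D n (y + polarEnc n c) i (u + c) = post D n y i u := by
  have hupd : ∀ b : ZMod 2, Function.update (u + c) i b = Function.update u i b + c := by
    intro b; funext j
    by_cases h : j = i
    · subst h; simp [hci]
    · simp [Function.update_of_ne h]
  unfold post
  rw [hupd, hupd, Wi_shift, Wi_shift, Wi_shift]

set_option maxHeartbeats 1000000 in
/-- **The value of the frozen bits does not matter**: the average distortion of the Standard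
Model SM(F, ũ_F) is independent of the choice of the frozen vector `ũ_F`. -/
theorem avgDist_independent_of_frozen_bits (D : ℝ) (hD0 : 0 < D) (hD1 : D < 1) (n : ℕ)
    (F : Finset (Fin (2 ^ n))) (ut ut' : Fin (2 ^ n) → ZMod 2) :
    avgDist D n F ut = avgDist D n F ut' := by
  classical
  set c : Fin (2 ^ n) → ZMod 2 := fun i => if i ∈ F then ut' i - ut i else 0 with hc
  unfold avgDist
  refine Fintype.sum_equiv (Equiv.addRight (polarEnc n c)) _ _ (fun y => ?_)
  simp only [Equiv.coe_addRight]
  congr 1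
  rw [Finset.sum_filter, Finset.sum_filter]
  refine Fintype.sum_equiv (Equiv.addRight c) _ _ (fun u => ?_)
  simp only [Equiv.coe_addRight]
  have hcond : (∀ i ∈ F, u i = ut i) ↔ (∀ i ∈ F, (u + c) i = ut' i) := by
    constructor <;> intro h i hi <;> have h' := h i hi <;>
      simp only [Pi.add_apply, hc, if_pos hi] at h' ⊢ <;> linear_combination h'
  have hA : (∏ i ∈ Fᶜ, post D n y i u) * (hammingDist y (polarEnc n u) : ℝ)
      = (∏ i ∈ Fᶜ, post D n (y + polarEnc n c) i (u + c)) *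
        (hammingDist (y + polarEnc n c) (polarEnc n (u + c)) : ℝ) := by
    have hprod : (∏ i ∈ Fᶜ, post D n (y + polarEnc n c) i (u + c))
        = ∏ i ∈ Fᶜ, post D n y i u := by
      apply Finset.prod_congr rfl
      intro i hi
      have hci : c i = 0 := by
        simp only [hc]
        rw [if_neg (Finset.mem_compl.mp hi)]
      exact post_shift D n y i u c hci
    have hdist : hammingDist (y + polarEnc n c) (polarEnc n (u + c)) =
        hammingDist y (polarEnc n u) := by
      rw [polarEnc_add]
      exact hamm_shift y (polarEnc n u) (polarEnc n c)
    rw [hprod, hdist]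
  exact if_congr hcond hA rfl


end
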